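/- Let f(x) be an irreducible polynomial of degree n with integer coefficients whose Galois group over ℚ is isomorphic to the symmetric group S_n. Then for every k with 1 ≤ k ≤ ⌊n/2⌋ and every choice of k distinct roots α_{i1}, …, α_{ik} of f in an algebraic closure of ℚ, the product α_{i1}⋯α_{ik} ≠ 1. -/

import Mathlib

open Polynomial

/-- The natural permutation representation of the Galois group on the roots in the
splitting field itself, with `↑(σ x) = σ ↑x` definitionally. -/
noncomputable def rootPermHom (g : Polynomial ℚ) :
    g.Gal →* Equiv.Perm (g.rootSet g.SplittingField) where
  toFun σ :=
    { toFun := fun x => ⟨σ x.1, rootSet_mapsTo σ.toAlgHom x.2⟩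
      invFun := fun x => ⟨(AlgEquiv.symm σ) x.1, rootSet_mapsTo (AlgEquiv.symm σ).toAlgHom x.2⟩
      left_inv := fun x => Subtype.ext (AlgEquiv.symm_apply_apply σ x.1)
      right_inv := fun x => Subtype.ext (AlgEquiv.apply_symm_apply σ x.1) }
  map_one' := Equiv.ext fun _ => Subtype.ext rfl
  map_mul' _ _ := Equiv.ext fun _ => Subtype.ext rfl

theorem rootPermHom_injective (g : Polynomial ℚ) : Function.Injective (rootPermHom g) := by
  rw [injective_iff_map_eq_one]
  intro σ hσ
  apply Polynomial.Gal.ext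
  intro x hx
  have := congrArg Subtype.val (Equiv.ext_iff.mp hσ ⟨x, hx⟩)
  exact (show σ x = x by simpa [rootPermHom] using this)

theorem regular_of_galois_symmetric (f : Polynomial ℤ) (n : ℕ) (hdeg : f.natDegree = n)
    (hirr : Irreducible (f.map (Int.castRingHom ℚ)))
    (hgal : Nonempty ((f.map (Int.castRingHom ℚ)).Gal ≃* Equiv.Perm (Fin n))) :
    ∀ k, 1 ≤ k → k ≤ n / 2 →
      ∀ s : Multiset (AlgebraicClosure ℚ),
        s ≤ (f.map (Int.castRingHom (AlgebraicClosure ℚ))).roots →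
        Multiset.card s = k → s.prod ≠ 1 := by
  classical
  intro k hk1 hk2 s hsle hscard hprod
  set g : Polynomial ℚ := f.map (Int.castRingHom ℚ) with hgdef
  have hsep : g.Separable := hirr.separable
  have hgn : g.natDegree = n := by
    rw [hgdef, natDegree_map_eq_of_injective Int.cast_injective f, hdeg]
  have hsplK : (g.map (algebraMap ℚ g.SplittingField)).Splits :=
    SplittingField.splits g
  have hRcard : Multiset.card (g.map (algebraMap ℚ g.SplittingField)).roots = n := by
    have h := splits_iff_card_roots.mp hsplK
    rw [natDegree_map, hgn] at h
    exact h
  have hRnodup : (g.map (algebraMap ℚ g.SplittingField)).roots.Nodup := nodup_roots (hsep.map)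
  -- the embedding of the splitting field into the algebraic closure
  let ι : g.SplittingField →ₐ[ℚ] AlgebraicClosure ℚ := IsAlgClosed.lift
  have hι : Function.Injective ι := ι.toRingHom.injective
  have hmap : f.map (Int.castRingHom (AlgebraicClosure ℚ)) =
      (g.map (algebraMap ℚ g.SplittingField)).map (ι : g.SplittingField →+* AlgebraicClosure ℚ) := by
    show f.map (Int.castRingHom (AlgebraicClosure ℚ)) =
      ((f.map (Int.castRingHom ℚ)).map (algebraMap ℚ g.SplittingField)).map
        (ι : g.SplittingField →+* AlgebraicClosure ℚ)
    rw [map_map, map_map]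
    exact congrArg (fun φ : ℤ →+* AlgebraicClosure ℚ => f.map φ) (RingHom.ext_int _ _)
  have hroots_ac : (f.map (Int.castRingHom (AlgebraicClosure ℚ))).roots =
      (g.map (algebraMap ℚ g.SplittingField)).roots.map ι := by
    rw [hmap]
    exact hsplK.roots_map (ι : g.SplittingField →+* AlgebraicClosure ℚ)
  rw [hroots_ac] at hsle
  -- pull `s` back to the splitting field
  let j : AlgebraicClosure ℚ → g.SplittingField := Function.invFun ι
  have hji : ∀ x : g.SplittingField, j (ι x) = x := Function.leftInverse_invFun hι
  have hts : s.map j ≤ (g.map (algebraMap ℚ g.SplittingField)).roots := by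
    have h1 := Multiset.map_le_map (f := j) hsle
    rw [Multiset.map_map] at h1
    have h2 : (g.map (algebraMap ℚ g.SplittingField)).roots.map (j ∘ ι) =
        (g.map (algebraMap ℚ g.SplittingField)).roots := by
      rw [show (j ∘ (ι : g.SplittingField → AlgebraicClosure ℚ)) = id from funext hji,
        Multiset.map_id]
    rwa [h2] at h1
  set t : Multiset g.SplittingField := s.map j with ht
  have htmap : t.map ι = s := by
    rw [ht, Multiset.map_map]
    have h3 : ∀ a ∈ s, ((ι : g.SplittingField → AlgebraicClosure ℚ) ∘ j) a = a := by
      intro a ha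
      obtain ⟨x, _, rfl⟩ := Multiset.mem_map.mp (Multiset.mem_of_le hsle ha)
      simp only [Function.comp_apply, hji]
    rw [Multiset.map_congr rfl h3, Multiset.map_id']
  have htcard : Multiset.card t = k := by rw [ht, Multiset.card_map, hscard]
  have htprod : t.prod = 1 := by
    apply hι
    rw [map_multiset_prod, htmap, hprod, map_one]
  have htnodup : t.Nodup := Multiset.nodup_of_le hts hRnodup
  -- basic numerics
  have hn2 : 2 ≤ n := by omega
  have hkn : k < n := by omega
  -- pick α ∈ t and β ∈ roots \ t
  obtain ⟨α, hα⟩ := Multiset.card_pos_iff_exists_mem.mp (by omega : 0 < Multiset.card t)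
  obtain ⟨u, hu⟩ := Multiset.le_iff_exists_add.mp hts
  have hucard : 0 < Multiset.card u := by
    have := congrArg Multiset.card hu
    rw [Multiset.card_add, hRcard, htcard] at this
    omega
  obtain ⟨β, hβu⟩ := Multiset.card_pos_iff_exists_mem.mp hucard
  have hβR : β ∈ (g.map (algebraMap ℚ g.SplittingField)).roots := by
    rw [hu]; exact Multiset.mem_add.mpr (Or.inr hβu)
  have hβt : β ∉ t := by
    intro hβt
    have hcount : 2 ≤ Multiset.count β (g.map (algebraMap ℚ g.SplittingField)).roots := by
      rw [hu, Multiset.count_add]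
      have h1 := Multiset.one_le_count_iff_mem.mpr hβt
      have h2 := Multiset.one_le_count_iff_mem.mpr hβu
      omega
    have := Multiset.nodup_iff_count_le_one.mp hRnodup β
    omega
  have hαβ : α ≠ β := fun h => hβt (h ▸ hα)
  have hαR : α ∈ (g.map (algebraMap ℚ g.SplittingField)).roots := Multiset.mem_of_le hts hα
  -- memberships in the root set
  have hmemRS : ∀ x : g.SplittingField,
      x ∈ (g.map (algebraMap ℚ g.SplittingField)).roots → x ∈ g.rootSet g.SplittingField := by
    intro x hx
    rw [Polynomial.rootSet, Polynomial.aroots]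
    exact Multiset.mem_toFinset.mpr hx
  have hαRS : α ∈ g.rootSet g.SplittingField := hmemRS α hαR
  have hβRS : β ∈ g.rootSet g.SplittingField := hmemRS β hβR
  -- the root permutation representation is bijective
  have hcards : Fintype.card g.Gal =
      Fintype.card (Equiv.Perm (g.rootSet g.SplittingField)) := by
    obtain ⟨e⟩ := hgal
    rw [Fintype.card_congr e.toEquiv, Fintype.card_perm, Fintype.card_perm, Fintype.card_fin]
    rw [← hgn, ← card_rootSet_eq_natDegree hsep (SplittingField.splits g)]
    congr 2
  have hsurj : Function.Surjective (rootPermHom g) :=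
    ((Fintype.bijective_iff_injective_and_card _).mpr
      ⟨rootPermHom_injective g, hcards⟩).surjective
  -- get the transposition swapping α and β
  obtain ⟨σ, hσ⟩ := hsurj (Equiv.swap ⟨α, hαRS⟩ ⟨β, hβRS⟩)
  have happly : ∀ (x : g.SplittingField) (hx : x ∈ g.rootSet g.SplittingField),
      σ x = ((Equiv.swap (⟨α, hαRS⟩ : g.rootSet g.SplittingField) ⟨β, hβRS⟩) ⟨x, hx⟩ :
        g.SplittingField) := by
    intro x hx
    have := congrArg Subtype.val (Equiv.ext_iff.mp hσ ⟨x, hx⟩)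
    simpa [rootPermHom] using this
  have hσα : σ α = β := by
    rw [happly α hαRS, Equiv.swap_apply_left]
  have hσfix : ∀ x ∈ t.erase α, σ x = x := by
    intro x hx
    have hxα : x ≠ α := (htnodup.mem_erase_iff.mp hx).1
    have hxt : x ∈ t := (htnodup.mem_erase_iff.mp hx).2
    have hxβ : x ≠ β := fun h => hβt (h ▸ hxt)
    have hxRS : x ∈ g.rootSet g.SplittingField := hmemRS x (Multiset.mem_of_le hts hxt)
    rw [happly x hxRS, Equiv.swap_apply_of_ne_of_ne
      (fun h => hxα (congrArg Subtype.val h)) (fun h => hxβ (congrArg Subtype.val h))]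
  -- final computation
  have hcons : t = α ::ₘ t.erase α := (Multiset.cons_erase hα).symm
  have h1 : ((t.map σ).prod : g.SplittingField) = 1 := by
    rw [← map_multiset_prod, htprod, map_one]
  have h2 : t.map σ = β ::ₘ t.erase α := by
    conv_lhs => rw [hcons]
    rw [Multiset.map_cons, hσα, Multiset.map_congr rfl hσfix, Multiset.map_id']
  rw [h2, Multiset.prod_cons] at h1
  have h3 : α * (t.erase α).prod = 1 := by
    rw [← Multiset.prod_cons, ← hcons, htprod]
  have hP : (t.erase α).prod ≠ 0 := by
    intro h
    rw [h, mul_zero] at h3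
    exact zero_ne_one h3
  exact hαβ (mul_right_cancel₀ hP (h3.trans h1.symm))
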